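/- Let (G; t_1,...,t_k) be a simple instance with G claw-free, and let u be a vertex of G whose neighborhood N(u) contains the vertex set of an induced cycle of G of length five. Then (G; t_1,...,t_k) has a solution if and only if (G - u; t_1,...,t_k) has a solution, where G - u is the subgraph of G induced by V(G) \ {u}. -/

import Mathlib

/-- A graph is claw-free if it has no induced subgraph isomorphic to the claw `K_{1,3}`:
a center `x` adjacent to three pairwise distinct, pairwise non-adjacent leaves. -/
def ClawFree {V : Type*} (G : SimpleGraph V) : Prop :=
  ¬ ∃ x a b c : V, G.Adj x a ∧ G.Adj x b ∧ G.Adj x c ∧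
      a ≠ b ∧ a ≠ c ∧ b ≠ c ∧ ¬ G.Adj a b ∧ ¬ G.Adj a c ∧ ¬ G.Adj b c

/-- `l` is the list of consecutive vertices of an induced path of `G`:
its vertices are distinct and two of them are adjacent in `G` exactly when
they are consecutive in `l`. -/
def IsInducedPathList {V : Type*} (G : SimpleGraph V) (l : List V) : Prop :=
  l.Nodup ∧ ∀ i j : Fin l.length,
    G.Adj (l.get i) (l.get j) ↔ (i.1 + 1 = j.1 ∨ j.1 + 1 = i.1)

/-- `l` is a solution for the instance `(G; t 0, …, t (k-1))`: an induced path with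
endpoints `t 0` and `t (k-1)` that contains every terminal, the terminals appearing
along the path in the order `t 0, t 1, …, t (k-1)`. -/
def IsSolution {V : Type*} (G : SimpleGraph V) {k : ℕ} (t : Fin k → V) (l : List V) : Prop :=
  IsInducedPathList G l ∧
  ∃ pos : Fin k → Fin l.length,
    StrictMono pos ∧ (∀ i, l.get (pos i) = t i) ∧
    (∀ i : Fin k, i.1 = 0 → (pos i).1 = 0) ∧
    (∀ i : Fin k, i.1 = k - 1 → (pos i).1 = l.length - 1)

/-- The instance `(G; t 0, …, t (k-1))` is simple: the terminals are distinct, the two end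
terminals have degree one in `G`, every other terminal has degree two in `G` with its two
neighbors non-adjacent, distinct terminals are at distance at least four, and `G` is
connected. -/
def SimpleInstance {V : Type*} (G : SimpleGraph V) {k : ℕ} (t : Fin k → V) : Prop :=
  2 ≤ k ∧ Function.Injective t ∧
  (∀ i : Fin k, (i.1 = 0 ∨ i.1 = k - 1) → (G.neighborSet (t i)).ncard = 1) ∧
  (∀ i : Fin k, i.1 ≠ 0 → i.1 ≠ k - 1 →
      (G.neighborSet (t i)).ncard = 2 ∧
      ∀ x y : V, G.Adj (t i) x → G.Adj (t i) y → x ≠ y → ¬ G.Adj x y) ∧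
  (∀ i j : Fin k, i ≠ j → 4 ≤ G.dist (t i) (t j)) ∧
  G.Connected

/- ### Auxiliary lemmas -/

lemma arc3 (P : Fin 5 → Prop) (hP : ∀ i, P i ∨ P (i+2)) : ∃ i, P i ∧ P (i+1) ∧ P (i+2) := by
  by_cases h0 : P 0
  · by_cases h1 : P 1
    · by_cases h2 : P 2
      · exact ⟨0, h0, h1, h2⟩
      · have h4 := (hP 2).resolve_left h2
        exact ⟨4, h4, by simpa using h0, by simpa using h1⟩
    · have h3 := (hP 1).resolve_left h1
      have h4 := (hP 4).resolve_right (by simpa using h1)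
      exact ⟨3, h3, h4, by simpa using h0⟩
  · have h2 := (hP 0).resolve_left h0
    have h3 := (hP 3).resolve_right (by simpa using h0)
    rcases hP 4 with h4 | h1
    · exact ⟨2, h2, h3, by simpa using h4⟩
    · exact ⟨1, by simpa using h1, h2, by simpa using h3⟩

lemma arcs_intersect : ∀ i j : Fin 5, ∃ m : Fin 5,
    (m = i ∨ m = i + 1 ∨ m = i + 2) ∧ (m = j ∨ m = j + 1 ∨ m = j + 2) := by decide

lemma cyc_adj_succ : ∀ i : Fin 5, (SimpleGraph.cycleGraph 5).Adj i (i+1) := by decide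
lemma cyc_nadj_two : ∀ i : Fin 5, ¬ (SimpleGraph.cycleGraph 5).Adj i (i+2) := by decide
lemma cyc_ne_two : ∀ i : Fin 5, i ≠ i + 2 := by decide
lemma cyc_common : ∀ i j : Fin 5, i ≠ j → ¬ (SimpleGraph.cycleGraph 5).Adj i j →
    ∃ m, (SimpleGraph.cycleGraph 5).Adj i m ∧ (SimpleGraph.cycleGraph 5).Adj j m := by decide
lemma cyc_adj_nbrs : ∀ i : Fin 5, (SimpleGraph.cycleGraph 5).Adj i (i-1) ∧
    (SimpleGraph.cycleGraph 5).Adj i (i+1) := by decide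
lemma cyc_sub_add : ∀ i : Fin 5, (i - 1) + 2 = i + 1 := by decide

lemma common_nbr {V : Type*} {G : SimpleGraph V} {u p q : V} (hG : ClawFree G)
    (f : SimpleGraph.cycleGraph 5 ↪g G) (hf : ∀ i, G.Adj u (f i))
    (hup : G.Adj u p) (huq : G.Adj u q)
    (hpq : ¬ G.Adj p q) (hne : p ≠ q) : ∃ i : Fin 5, G.Adj p (f i) ∧ G.Adj q (f i) := by
  have fadj : ∀ i j : Fin 5, G.Adj (f i) (f j) ↔ (SimpleGraph.cycleGraph 5).Adj i j :=
    fun i j => f.map_adj_iff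
  have harc : ∀ w : V, G.Adj u w → (∀ i0 : Fin 5, w ≠ f i0) →
      ∀ i : Fin 5, G.Adj w (f i) ∨ G.Adj w (f (i+2)) := by
    intro w huw hwr i
    by_contra hcon
    push_neg at hcon
    exact hG ⟨u, w, f i, f (i+2), huw, hf i, hf (i+2), hwr i, hwr (i+2),
      fun e => cyc_ne_two i (f.injective e), hcon.1, hcon.2,
      fun h => cyc_nadj_two i ((fadj _ _).mp h)⟩
  by_cases hpr : ∃ i0, p = f i0
  · obtain ⟨i0, rfl⟩ := hpr
    by_cases hqr : ∃ j0, q = f j0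
    · obtain ⟨j0, rfl⟩ := hqr
      have hne' : i0 ≠ j0 := fun e => hne (congrArg f e)
      obtain ⟨m, h1, h2⟩ := cyc_common i0 j0 hne' (fun h => hpq ((fadj _ _).mpr h))
      exact ⟨m, (fadj _ _).mpr h1, (fadj _ _).mpr h2⟩
    · push_neg at hqr
      rcases harc q huq hqr (i0 - 1) with h | h
      · exact ⟨i0 - 1, (fadj _ _).mpr (cyc_adj_nbrs i0).1, h⟩
      · rw [cyc_sub_add i0] at h
        exact ⟨i0 + 1, (fadj _ _).mpr (cyc_adj_nbrs i0).2, h⟩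
  · push_neg at hpr
    by_cases hqr : ∃ j0, q = f j0
    · obtain ⟨j0, rfl⟩ := hqr
      rcases harc p hup hpr (j0 - 1) with h | h
      · exact ⟨j0 - 1, h, (fadj _ _).mpr (cyc_adj_nbrs j0).1⟩
      · rw [cyc_sub_add j0] at h
        exact ⟨j0 + 1, h, (fadj _ _).mpr (cyc_adj_nbrs j0).2⟩
    · push_neg at hqr
      obtain ⟨i, hp1, hp2, hp3⟩ := arc3 _ (harc p hup hpr)
      obtain ⟨j, hq1, hq2, hq3⟩ := arc3 _ (harc q huq hqr)
      obtain ⟨m, hmi, hmj⟩ := arcs_intersect i j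
      refine ⟨m, ?_, ?_⟩
      · rcases hmi with rfl | rfl | rfl <;> assumption
      · rcases hmj with rfl | rfl | rfl <;> assumption

lemma sol_map {V : Type*} (G : SimpleGraph V) (s : Set V) {k : ℕ} (t : Fin k → V)
    (ht : ∀ i, t i ∈ s) (l : List s)
    (h : IsSolution (G.induce s) (fun i => ⟨t i, ht i⟩) l) :
    IsSolution G t (l.map Subtype.val) := by
  obtain ⟨⟨hnd, hadj⟩, pos, hmono, hget, hfirst, hlast⟩ := h
  have hlen : (l.map Subtype.val).length = l.length := l.length_map _
  have hgm : ∀ i : Fin (l.map Subtype.val).length,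
      (l.map Subtype.val).get i = (l.get (Fin.cast hlen i) : V) := by
    intro i
    rw [List.get_eq_getElem, List.get_eq_getElem, List.getElem_map]
    rfl
  refine ⟨⟨hnd.map Subtype.val_injective, ?_⟩,
    fun i => Fin.cast hlen.symm (pos i), ?_, ?_, ?_, ?_⟩
  · intro i j
    rw [hgm i, hgm j]
    exact hadj (Fin.cast hlen i) (Fin.cast hlen j)
  · intro i j hij
    exact hmono hij
  · intro i
    rw [hgm]
    have := hget i
    exact congrArg Subtype.val (by simpa using this)
  · intro i hi
    exact hfirst i hi
  · intro i hi
    show ((Fin.cast hlen.symm (pos i)) : Fin _).1 = _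
    simp only [Fin.coe_cast, hlen]
    exact hlast i hi

lemma sol_restrict {V : Type*} (G : SimpleGraph V) (s : Set V) {k : ℕ} (t : Fin k → V)
    (ht : ∀ i, t i ∈ s) (l : List V) (h : IsSolution G t l)
    (hl : ∀ i : Fin l.length, l.get i ∈ s) :
    ∃ l' : List s, IsSolution (G.induce s) (fun i => ⟨t i, ht i⟩) l' := by
  classical
  obtain ⟨⟨hnd, hadj⟩, pos, hmono, hget, hfirst, hlast⟩ := h
  set g : Fin l.length → s := fun i => (⟨l.get i, hl i⟩ : s) with hgdef
  have hlen : (List.ofFn g).length = l.length := List.length_ofFn (f := g)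
  have hgm : ∀ i : Fin (List.ofFn g).length,
      (List.ofFn g).get i = g (Fin.cast hlen i) := fun i => List.get_ofFn g i
  refine ⟨List.ofFn g, ⟨?_, ?_⟩, fun i => Fin.cast hlen.symm (pos i), ?_, ?_, ?_, ?_⟩
  · refine List.nodup_ofFn.mpr ?_
    intro i j hij
    exact List.nodup_iff_injective_get.mp hnd (by simpa [hgdef, Subtype.ext_iff] using hij)
  · intro i j
    rw [hgm i, hgm j]
    exact hadj (Fin.cast hlen i) (Fin.cast hlen j)
  · intro i j hij
    exact hmono hij
  · intro i
    rw [hgm]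
    exact Subtype.ext (by simpa [hgdef] using hget i)
  · intro i hi
    exact hfirst i hi
  · intro i hi
    show ((Fin.cast hlen.symm (pos i)) : Fin _).1 = _
    simp only [Fin.coe_cast, hlen]
    exact hlast i hi

/-- The splice of `c` into `l`, keeping positions `0,…,a` and `b,…,l.length-1`. -/
def spliceFun {V : Type*} (l : List V) (c : V) (a b : ℕ) (hab : a + 2 ≤ b)
    (hb : b + 1 ≤ l.length) : Fin (a + (l.length - b) + 2) → V := fun i =>
  if h : i.1 ≤ a then l.get ⟨i.1, by omega⟩
  else if h2 : i.1 = a + 1 then c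
  else l.get ⟨i.1 + b - (a + 2), by have := i.isLt; omega⟩

lemma spliceFun_left {V : Type*} (l : List V) (c : V) (a b : ℕ) (hab : a + 2 ≤ b)
    (hb : b + 1 ≤ l.length) (i : Fin (a + (l.length - b) + 2)) (h : i.1 ≤ a)
    (hi : i.1 < l.length) : spliceFun l c a b hab hb i = l.get ⟨i.1, hi⟩ := dif_pos h

lemma spliceFun_mid {V : Type*} (l : List V) (c : V) (a b : ℕ) (hab : a + 2 ≤ b)
    (hb : b + 1 ≤ l.length) (i : Fin (a + (l.length - b) + 2)) (h : i.1 = a + 1) :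
    spliceFun l c a b hab hb i = c := by
  unfold spliceFun
  rw [dif_neg (by omega), dif_pos h]

lemma spliceFun_right {V : Type*} (l : List V) (c : V) (a b : ℕ) (hab : a + 2 ≤ b)
    (hb : b + 1 ≤ l.length) (i : Fin (a + (l.length - b) + 2)) (h : a + 2 ≤ i.1)
    (hi : i.1 + b - (a + 2) < l.length) :
    spliceFun l c a b hab hb i = l.get ⟨i.1 + b - (a + 2), hi⟩ := by
  unfold spliceFun
  rw [dif_neg (by omega), dif_neg (by omega)]

set_option maxHeartbeats 1000000 in
/-- Lemma 11: in a simple claw-free instance, if the neighborhood of a vertex `u`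
contains the vertex set of an induced five-cycle of `G`, then the instance has a
solution if and only if the instance obtained by deleting `u` has a solution. -/
theorem stmt6 {V : Type*} [Fintype V] (G : SimpleGraph V) {k : ℕ} (t : Fin k → V)
    (hsi : SimpleInstance G t) (hG : ClawFree G)
    (u : V) (f : SimpleGraph.cycleGraph 5 ↪g G) (hf : ∀ i, G.Adj u (f i))
    (ht : ∀ i, t i ≠ u) :
    (∃ l : List V, IsSolution G t l) ↔
      (∃ l : List {v : V // v ∈ ({v | v ≠ u} : Set V)},
        IsSolution (G.induce {v | v ≠ u}) (fun i => ⟨t i, ht i⟩) l) := by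
  classical
  obtain ⟨hk, htinj, hdeg1, hdeg2, hdist, hconn⟩ := hsi
  have hmem : ∀ i, t i ∈ ({v | v ≠ u} : Set V) := fun i => ht i
  constructor
  · rintro ⟨l, hsol⟩
    suffices hsuff : ∃ l2 : List V, IsSolution G t l2 ∧
        ∀ i : Fin l2.length, l2.get i ∈ ({v | v ≠ u} : Set V) by
      obtain ⟨l2, hs2, hm2⟩ := hsuff
      exact sol_restrict G _ t hmem l2 hs2 hm2
    by_cases hu : ∀ i : Fin l.length, l.get i ≠ u
    · exact ⟨l, hsol, hu⟩
    push_neg at hu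
    obtain ⟨mf, hmf⟩ := hu
    obtain ⟨⟨hnd, hadj⟩, pos, hmono, hget, hfirst, hlast⟩ := hsol
    have hgetinj := List.nodup_iff_injective_get.mp hnd
    have get_ne : ∀ (i j : ℕ) (hi : i < l.length) (hj : j < l.length), i ≠ j →
        l.get ⟨i, hi⟩ ≠ l.get ⟨j, hj⟩ := by
      intro i j hi hj hne he
      exact hne (congrArg Fin.val (hgetinj he))
    have get_congr : ∀ (i j : ℕ) (hi : i < l.length) (hj : j < l.length), i = j →
        l.get ⟨i, hi⟩ = l.get ⟨j, hj⟩ := by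
      intro i j hi hj h
      subst h
      rfl
    have adj_iff : ∀ (i j : ℕ) (hi : i < l.length) (hj : j < l.length),
        (G.Adj (l.get ⟨i, hi⟩) (l.get ⟨j, hj⟩) ↔ (i + 1 = j ∨ j + 1 = i)) :=
      fun i j hi hj => hadj ⟨i, hi⟩ ⟨j, hj⟩
    have hm0lt : mf.1 < l.length := mf.isLt
    set m0 := mf.1 with hm0def
    have hgm : l.get ⟨m0, hm0lt⟩ = u := hmf
    have hk0 : (0 : ℕ) < k := by omega
    have hkK : k - 1 < k := by omega
    have h00 := hfirst ⟨0, hk0⟩ rfl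
    have hKK := hlast ⟨k - 1, hkK⟩ rfl
    have hlpos : 0 < l.length := mf.pos
    have hget0 : l.get ⟨0, hlpos⟩ = t ⟨0, hk0⟩ := by
      rw [← hget ⟨0, hk0⟩]; congr 1; exact Fin.ext h00.symm
    have hlast_lt : l.length - 1 < l.length := by omega
    have hgetK : l.get ⟨l.length - 1, hlast_lt⟩ = t ⟨k - 1, hkK⟩ := by
      rw [← hget ⟨k - 1, hkK⟩]; congr 1; exact Fin.ext hKK.symm
    have hm0ne0 : m0 ≠ 0 := by
      intro h
      refine ht ⟨0, hk0⟩ ?_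
      rw [← hget0, show (⟨0, hlpos⟩ : Fin l.length) = ⟨m0, hm0lt⟩ from Fin.ext h.symm]
      exact hgm
    have hm0neK : m0 ≠ l.length - 1 := by
      intro h
      refine ht ⟨k - 1, hkK⟩ ?_
      rw [← hgetK, show (⟨l.length - 1, hlast_lt⟩ : Fin l.length) = ⟨m0, hm0lt⟩ from
        Fin.ext h.symm]
      exact hgm
    have hm1 : 1 ≤ m0 := by omega
    have hplt : m0 - 1 < l.length := by omega
    have hqlt : m0 + 1 < l.length := by omega
    set p := l.get ⟨m0 - 1, hplt⟩ with hpdef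
    set q := l.get ⟨m0 + 1, hqlt⟩ with hqdef
    have hup : G.Adj u p := by
      rw [← hgm, hpdef]; exact (adj_iff m0 (m0-1) _ _).mpr (Or.inr (by omega))
    have huq : G.Adj u q := by
      rw [← hgm, hqdef]; exact (adj_iff m0 (m0+1) _ _).mpr (Or.inl rfl)
    have hpq : ¬ G.Adj p q := by
      intro h
      rw [hpdef, hqdef] at h
      rcases (adj_iff (m0-1) (m0+1) hplt hqlt).mp h with h' | h' <;> omega
    have hpnq : p ≠ q := by
      rw [hpdef, hqdef]; exact get_ne _ _ _ _ (by omega)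
    obtain ⟨ci, hpc, hqc⟩ := common_nbr hG f hf hup huq hpq hpnq
    set c := f ci with hcdef
    have huc : G.Adj u c := hf ci
    have hcnotin : ∀ (j : ℕ) (hj : j < l.length), l.get ⟨j, hj⟩ ≠ c := by
      intro j hj he
      have h2 : G.Adj (l.get ⟨m0, hm0lt⟩) (l.get ⟨j, hj⟩) := by
        rw [hgm, he]; exact huc
      rcases (adj_iff _ _ _ _).mp h2 with h' | h'
      · refine G.ne_of_adj hqc ?_
        rw [hqdef, ← he]; exact get_congr _ _ _ _ (by omega)
      · refine G.ne_of_adj hpc ?_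
        rw [hpdef, ← he]; exact get_congr _ _ _ _ (by omega)
    have hW : ∀ (j : ℕ) (hj : j < l.length), j + 2 ≠ m0 → j + 1 ≠ m0 → j ≠ m0 →
        j ≠ m0 + 1 → j ≠ m0 + 2 → ¬ G.Adj c (l.get ⟨j, hj⟩) := by
      intro j hj h1 h2 h3 h4 h5 hca
      refine hG ⟨c, p, q, l.get ⟨j, hj⟩, hpc.symm, hqc.symm, hca, hpnq,
        ?_, ?_, hpq, ?_, ?_⟩
      · rw [hpdef]; exact get_ne _ _ _ _ (by omega)
      · rw [hqdef]; exact get_ne _ _ _ _ (by omega)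
      · rw [hpdef]
        intro h
        rcases (adj_iff (m0-1) j hplt hj).mp h with h' | h' <;> omega
      · rw [hqdef]
        intro h
        rcases (adj_iff (m0+1) j hqlt hj).mp h with h' | h' <;> omega
    have hclose : ∀ (w y z : V), G.Adj w y → G.Adj w z → y ≠ z → G.Adj y z →
        ∀ ik : Fin k, t ik ≠ w := by
      intro w y z hwy hwz hyz hyzadj ik he
      by_cases hik : ik.1 = 0 ∨ ik.1 = k - 1
      · obtain ⟨a0, ha0⟩ := Set.ncard_eq_one.mp (hdeg1 ik hik)
        have h1 : y ∈ G.neighborSet (t ik) := by rw [he]; exact hwy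
        have h2 : z ∈ G.neighborSet (t ik) := by rw [he]; exact hwz
        rw [ha0, Set.mem_singleton_iff] at h1 h2
        exact hyz (h1.trans h2.symm)
      · push_neg at hik
        exact (hdeg2 ik hik.1 hik.2).2 y z (by rw [he]; exact hwy)
          (by rw [he]; exact hwz) hyz hyzadj
    have hpterm : ∀ ik, t ik ≠ p := hclose p u c hup.symm hpc huc.ne huc
    have hqterm : ∀ ik, t ik ≠ q := hclose q u c huq.symm hqc huc.ne huc
    have hm2 : 2 ≤ m0 := by
      by_contra h
      refine hpterm ⟨0, hk0⟩ ?_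
      rw [← hget0, hpdef]; exact get_congr _ _ _ _ (by omega)
    have hm2r : m0 + 3 ≤ l.length := by
      by_contra h
      refine hqterm ⟨k - 1, hkK⟩ ?_
      rw [← hgetK, hqdef]; exact get_congr _ _ _ _ (by omega)
    -- choice of the left junction
    obtain ⟨a, haub, halb, hadjca, hnadjl, hintl⟩ :
        ∃ a : ℕ, m0 - 2 ≤ a ∧ a + 1 ≤ m0 ∧
          (∀ ha : a < l.length, G.Adj c (l.get ⟨a, ha⟩)) ∧
          (∀ (j : ℕ) (hj : j < l.length), j < a → ¬ G.Adj c (l.get ⟨j, hj⟩)) ∧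
          (∀ (j : ℕ) (hj : j < l.length), a < j → j < m0 →
            ∀ ik, t ik ≠ l.get ⟨j, hj⟩) := by
      have hma : m0 - 2 < l.length := by omega
      by_cases hca : G.Adj c (l.get ⟨m0 - 2, hma⟩)
      · refine ⟨m0 - 2, le_refl _, by omega, fun ha => hca, ?_, ?_⟩
        · intro j hj hja
          exact hW j hj (by omega) (by omega) (by omega) (by omega) (by omega)
        · intro j hj hja hjm ik
          have he : l.get ⟨j, hj⟩ = p := by
            rw [hpdef]; exact get_congr _ _ _ _ (by omega)
          rw [he]; exact hpterm ik
      · refine ⟨m0 - 1, by omega, by omega, fun ha => hpc.symm, ?_, ?_⟩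
        · intro j hj hja
          rcases eq_or_ne j (m0 - 2) with rfl | hne0
          · exact hca
          · exact hW j hj (by omega) (by omega) (by omega) (by omega) (by omega)
        · intro j hj h1 h2
          exact absurd h1 (by omega)
    -- choice of the right junction
    obtain ⟨b, hbub, hblb, hble, hadjcb, hnadjr, hintr⟩ :
        ∃ b : ℕ, m0 + 1 ≤ b ∧ b ≤ m0 + 2 ∧ b + 1 ≤ l.length ∧
          (∀ hb : b < l.length, G.Adj c (l.get ⟨b, hb⟩)) ∧
          (∀ (j : ℕ) (hj : j < l.length), b < j → ¬ G.Adj c (l.get ⟨j, hj⟩)) ∧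
          (∀ (j : ℕ) (hj : j < l.length), m0 < j → j < b →
            ∀ ik, t ik ≠ l.get ⟨j, hj⟩) := by
      have hmb : m0 + 2 < l.length := by omega
      by_cases hcb : G.Adj c (l.get ⟨m0 + 2, hmb⟩)
      · refine ⟨m0 + 2, by omega, le_refl _, by omega, fun hb => hcb, ?_, ?_⟩
        · intro j hj hjb
          exact hW j hj (by omega) (by omega) (by omega) (by omega) (by omega)
        · intro j hj hjm hjb ik
          have he : l.get ⟨j, hj⟩ = q := by
            rw [hqdef]; exact get_congr _ _ _ _ (by omega)
          rw [he]; exact hqterm ik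
      · refine ⟨m0 + 1, le_refl _, by omega, by omega, fun hb => hqc.symm, ?_, ?_⟩
        · intro j hj hjb
          rcases eq_or_ne j (m0 + 2) with rfl | hne0
          · exact hcb
          · exact hW j hj (by omega) (by omega) (by omega) (by omega) (by omega)
        · intro j hj h1 h2
          exact absurd h1 (by omega)
    have hint : ∀ (j : ℕ) (hj : j < l.length), a < j → j < b →
        ∀ ik, t ik ≠ l.get ⟨j, hj⟩ := by
      intro j hj h1 h2 ik
      rcases lt_trichotomy j m0 with h | h | h
      · exact hintl j hj h1 h ik
      · intro he
        subst h
        exact ht ik (he.trans hgm)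
      · exact hintr j hj h h2 ik
    have hadjca' : ∀ (j : ℕ) (hj : j < l.length), j = a → G.Adj c (l.get ⟨j, hj⟩) := by
      intro j hj h
      subst h
      exact hadjca hj
    have hadjcb' : ∀ (j : ℕ) (hj : j < l.length), j = b → G.Adj c (l.get ⟨j, hj⟩) := by
      intro j hj h
      subst h
      exact hadjcb hj
    have hab2 : a + 2 ≤ b := by omega
    set g := spliceFun l c a b hab2 hble with hgdef2
    have hlen' : (List.ofFn g).length = a + (l.length - b) + 2 := List.length_ofFn (f := g)
    have hget' : ∀ i : Fin (List.ofFn g).length,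
        (List.ofFn g).get i = g (Fin.cast hlen' i) := fun i => List.get_ofFn g i
    -- injectivity
    have hkey_ne : ∀ i j : Fin (a + (l.length - b) + 2), i.1 < j.1 → g i ≠ g j := by
      intro i j hij
      have hiL := i.isLt
      have hjL := j.isLt
      rcases le_or_gt j.1 a with hja | hja
      · rw [hgdef2, spliceFun_left l c a b hab2 hble i (by omega) (by omega),
          spliceFun_left l c a b hab2 hble j (by omega) (by omega)]
        exact get_ne _ _ _ _ (by omega)
      · rcases Nat.lt_or_ge j.1 (a + 2) with hj2 | hj2
        · have hj1 : j.1 = a + 1 := by omega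
          rw [hgdef2, spliceFun_mid l c a b hab2 hble j hj1,
            spliceFun_left l c a b hab2 hble i (by omega) (by omega)]
          exact hcnotin _ _
        · rw [hgdef2, spliceFun_right l c a b hab2 hble j hj2 (by omega)]
          rcases le_or_gt i.1 a with hia | hia
          · rw [spliceFun_left l c a b hab2 hble i hia (by omega)]
            exact get_ne _ _ _ _ (by omega)
          · rcases Nat.lt_or_ge i.1 (a + 2) with hi2 | hi2
            · rw [spliceFun_mid l c a b hab2 hble i (by omega)]
              exact (hcnotin _ _).symm
            · rw [spliceFun_right l c a b hab2 hble i hi2 (by omega)]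
              exact get_ne _ _ _ _ (by omega)
    have hginj : Function.Injective g := by
      intro i j he
      by_contra hne
      have hne' : i.1 ≠ j.1 := fun h => hne (Fin.ext h)
      rcases hne'.lt_or_gt with h | h
      · exact hkey_ne i j h he
      · exact hkey_ne j i h he.symm
    -- adjacency
    have hadjkey : ∀ i j : Fin (a + (l.length - b) + 2), i.1 < j.1 →
        (G.Adj (g i) (g j) ↔ i.1 + 1 = j.1) := by
      intro i j hij
      have hiL := i.isLt
      have hjL := j.isLt
      rcases le_or_gt j.1 a with hja | hja
      · rw [hgdef2, spliceFun_left l c a b hab2 hble i (by omega) (by omega),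
          spliceFun_left l c a b hab2 hble j (by omega) (by omega), adj_iff]
        omega
      · rcases Nat.lt_or_ge j.1 (a + 2) with hj2 | hj2
        · have hj1 : j.1 = a + 1 := by omega
          rw [hgdef2, spliceFun_mid l c a b hab2 hble j hj1,
            spliceFun_left l c a b hab2 hble i (by omega) (by omega)]
          constructor
          · intro h
            by_contra hne
            exact hnadjl i.1 (by omega) (by omega) h.symm
          · intro h
            exact (hadjca' i.1 (by omega) (by omega)).symm
        · rw [hgdef2, spliceFun_right l c a b hab2 hble j hj2 (by omega)]
          rcases le_or_gt i.1 a with hia | hia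
          · rw [spliceFun_left l c a b hab2 hble i hia (by omega), adj_iff]
            omega
          · rcases Nat.lt_or_ge i.1 (a + 2) with hi2 | hi2
            · have hi1 : i.1 = a + 1 := by omega
              rw [spliceFun_mid l c a b hab2 hble i hi1]
              constructor
              · intro h
                by_contra hne
                exact hnadjr (j.1 + b - (a + 2)) (by omega) (by omega) h
              · intro h
                exact hadjcb' (j.1 + b - (a + 2)) (by omega) (by omega)
            · rw [spliceFun_right l c a b hab2 hble i hi2 (by omega), adj_iff]
              omega
    have hadj' : ∀ i j : Fin (a + (l.length - b) + 2),
        G.Adj (g i) (g j) ↔ (i.1 + 1 = j.1 ∨ j.1 + 1 = i.1) := by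
      intro i j
      rcases lt_trichotomy i.1 j.1 with h | h | h
      · rw [hadjkey i j h]; omega
      · have : i = j := Fin.ext h
        subst this
        exact ⟨fun h2 => absurd h2 (G.irrefl), fun h2 => absurd h2 (by omega)⟩
      · rw [G.adj_comm, hadjkey j i h]; omega
    -- all vertices differ from u
    have hgne_u : ∀ i : Fin (a + (l.length - b) + 2), g i ≠ u := by
      intro i
      have hiL := i.isLt
      rcases le_or_gt i.1 a with h | h
      · rw [hgdef2, spliceFun_left l c a b hab2 hble i h (by omega)]
        intro he
        exact (get_ne i.1 m0 (by omega) hm0lt (by omega)) (he.trans hgm.symm)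
      · rcases Nat.lt_or_ge i.1 (a + 2) with h2 | h2
        · rw [hgdef2, spliceFun_mid l c a b hab2 hble i (by omega)]
          exact huc.ne'
        · rw [hgdef2, spliceFun_right l c a b hab2 hble i h2 (by omega)]
          intro he
          exact (get_ne _ m0 (by omega) hm0lt (by omega)) (he.trans hgm.symm)
    -- positions of the terminals
    have hdich : ∀ ik : Fin k, (pos ik).1 ≤ a ∨ b ≤ (pos ik).1 := by
      intro ik
      by_contra hcon
      push_neg at hcon
      refine hint (pos ik).1 (pos ik).isLt hcon.1 (by omega) ik ?_
      exact (hget ik).symm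
    set posf : Fin k → Fin (a + (l.length - b) + 2) := fun ik =>
      ⟨if (pos ik).1 ≤ a then (pos ik).1 else (pos ik).1 + (a + 2) - b, by
        have := (pos ik).isLt; split <;> omega⟩ with hposfdef
    have hposfval : ∀ ik, (posf ik).1 =
        if (pos ik).1 ≤ a then (pos ik).1 else (pos ik).1 + (a + 2) - b :=
      fun ik => rfl
    have hmono' : StrictMono posf := by
      intro i1 i2 h
      have h12 : (pos i1).1 < (pos i2).1 := hmono h
      have d1 := hdich i1
      have d2 := hdich i2
      rw [Fin.lt_def, hposfval i1, hposfval i2]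
      split_ifs <;> omega
    have hgetpos : ∀ ik, g (posf ik) = t ik := by
      intro ik
      rcases hdich ik with d | d
      · have h1 : (posf ik).1 = (pos ik).1 := by rw [hposfval ik, if_pos d]
        rw [hgdef2, spliceFun_left l c a b hab2 hble (posf ik) (by omega)
          (by have := (pos ik).isLt; omega)]
        refine (get_congr _ (pos ik).1 _ (pos ik).isLt h1).trans ?_
        exact hget ik
      · have hna : ¬ (pos ik).1 ≤ a := by omega
        have h1 : (posf ik).1 = (pos ik).1 + (a + 2) - b := by
          rw [hposfval ik, if_neg hna]
        rw [hgdef2, spliceFun_right l c a b hab2 hble (posf ik) (by omega)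
          (by have := (pos ik).isLt; omega)]
        refine (get_congr _ (pos ik).1 _ (pos ik).isLt (by omega)).trans ?_
        exact hget ik
    refine ⟨List.ofFn g, ⟨⟨List.nodup_ofFn.mpr hginj, ?_⟩,
      fun ik => Fin.cast hlen'.symm (posf ik), ?_, ?_, ?_, ?_⟩, ?_⟩
    · intro i j
      rw [hget' i, hget' j]
      exact hadj' (Fin.cast hlen' i) (Fin.cast hlen' j)
    · intro i1 i2 h
      exact hmono' h
    · intro ik
      rw [hget']
      rw [show Fin.cast hlen' (Fin.cast hlen'.symm (posf ik)) = posf ik from Fin.ext rfl]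
      exact hgetpos ik
    · intro ik hik
      show ((Fin.cast hlen'.symm (posf ik)) : Fin _).1 = 0
      rw [Fin.coe_cast, hposfval ik, if_pos (by rw [hfirst ik hik]; omega)]
      rw [hfirst ik hik]
    · intro ik hik
      show ((Fin.cast hlen'.symm (posf ik)) : Fin _).1 = (List.ofFn g).length - 1
      have hl1 := hlast ik hik
      rw [Fin.coe_cast, hposfval ik, if_neg (by omega), hlen']
      omega
    · intro i
      rw [hget' i]
      exact hgne_u _
  · rintro ⟨l, hsol⟩
    exact ⟨l.map Subtype.val, sol_map G _ t hmem l hsol⟩
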